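/- Let 1/2 < p < 1, let 0 ≤ ε ≤ 1/2, and let q be a real with |q − 1/2| ≤ ε. Then H₂(p·q + (1−p)·(1−q)) ≥ H₂(1/2 + ε·(2p−1)), and consequently H₂(p·q + (1−p)·(1−q)) ≥ 1 − 4ε²·(1−2p)². -/

import Mathlib

/- Auxiliary lemmas -/

lemma log_one_add_le_cubic (t : ℝ) (ht : 0 ≤ t) :
    Real.log (1 + t) ≤ t - t^2/2 + t^3/3 := by
  have h : ∀ x ∈ Set.Ici (0:ℝ), HasDerivAt (fun y => y - y^2/2 + y^3/3 - Real.log (1+y))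
      (x^3/(1+x)) x := by
    intro x hx
    have hx0 : (0:ℝ) < 1 + x := by simp at hx; linarith
    have h1 : HasDerivAt (fun y : ℝ => y - y^2/2 + y^3/3) (1 - x + x^2) x := by
      have := ((hasDerivAt_id x).sub (((hasDerivAt_pow 2 x)).div_const 2)).add
        (((hasDerivAt_pow 3 x)).div_const 3)
      refine this.congr_deriv ?_; push_cast; ring
    have h2 : HasDerivAt (fun y : ℝ => Real.log (1+y)) (1/(1+x)) x := by
      have := (Real.hasDerivAt_log hx0.ne').comp x ((hasDerivAt_const x (1:ℝ)).add (hasDerivAt_id x))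
      simpa [Function.comp_def] using this
    have := h1.sub h2
    refine this.congr_deriv ?_
    field_simp; ring
  have mono : MonotoneOn (fun y : ℝ => y - y^2/2 + y^3/3 - Real.log (1+y)) (Set.Ici 0) := by
    apply monotoneOn_of_deriv_nonneg (convex_Ici 0)
    · exact ContinuousOn.sub (by fun_prop) (ContinuousOn.log (by fun_prop)
        (fun x hx => by simp at hx; intro h; linarith))
    · intro x hx
      simp only [interior_Ici, Set.mem_Ioi] at hx
      exact ((h x hx.le).differentiableAt).differentiableWithinAt
    · intro x hx
      simp only [interior_Ici, Set.mem_Ioi] at hx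
      rw [(h x hx.le).deriv]
      positivity
  have := mono (Set.self_mem_Ici) (Set.mem_Ici.mpr ht) ht
  simp at this
  linarith

lemma log_one_sub_le_quartic (t : ℝ) (ht : 0 ≤ t) (ht1 : t < 1) :
    Real.log (1 - t) ≤ -t - t^2/2 - t^3/3 - t^4/4 := by
  have h : ∀ x ∈ Set.Ico (0:ℝ) 1, HasDerivAt
      (fun y => -y - y^2/2 - y^3/3 - y^4/4 - Real.log (1-y)) (x^4/(1-x)) x := by
    intro x hx
    obtain ⟨hx0, hx1⟩ := hx
    have hx0' : (0:ℝ) < 1 - x := by linarith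
    have h1 : HasDerivAt (fun y : ℝ => -y - y^2/2 - y^3/3 - y^4/4) (-1 - x - x^2 - x^3) x := by
      have := (((hasDerivAt_id x).neg.sub ((hasDerivAt_pow 2 x).div_const 2)).sub
        ((hasDerivAt_pow 3 x).div_const 3)).sub ((hasDerivAt_pow 4 x).div_const 4)
      refine this.congr_deriv ?_; push_cast; ring
    have h2 : HasDerivAt (fun y : ℝ => Real.log (1-y)) (-(1/(1-x))) x := by
      have := (Real.hasDerivAt_log hx0'.ne').comp x
        ((hasDerivAt_const x (1:ℝ)).sub (hasDerivAt_id x))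
      simpa [Function.comp_def] using this
    have := h1.sub h2
    refine this.congr_deriv ?_
    field_simp; ring
  have mono : MonotoneOn (fun y : ℝ => -y - y^2/2 - y^3/3 - y^4/4 - Real.log (1-y))
      (Set.Ico 0 1) := by
    apply monotoneOn_of_deriv_nonneg (convex_Ico 0 1)
    · exact ContinuousOn.sub (by fun_prop) (ContinuousOn.log (by fun_prop)
        (fun x hx => by simp at hx; intro h; linarith [hx.2]))
    · intro x hx
      rw [interior_Ico] at hx
      exact ((h x ⟨hx.1.le, hx.2⟩).differentiableAt).differentiableWithinAt
    · intro x hx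
      rw [interior_Ico] at hx
      rw [(h x ⟨hx.1.le, hx.2⟩).deriv]
      have : (0:ℝ) < 1 - x := by linarith [hx.2]
      positivity
  have := mono (Set.mem_Ico.mpr ⟨le_refl 0, one_pos⟩) (Set.mem_Ico.mpr ⟨ht, ht1⟩) ht
  simp at this
  linarith

lemma phi_le (t : ℝ) (ht : 0 ≤ t) (ht1 : t < 1) :
    (1+t) * Real.log (1+t) + (1-t) * Real.log (1-t) ≤ 2 * Real.log 2 * t^2 := by
  have hl2 : (0.6931471803 : ℝ) < Real.log 2 := Real.log_two_gt_d9
  have h1t : (0:ℝ) < 1 + t := by linarith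
  have h1t' : (0:ℝ) < 1 - t := by linarith
  have hq := log_one_sub_le_quartic t ht ht1
  rcases le_or_gt t (7/10) with hc | hc
  · have hcu := log_one_add_le_cubic t ht
    nlinarith [mul_le_mul_of_nonneg_left hcu h1t.le,
      mul_le_mul_of_nonneg_left hq h1t'.le, sq_nonneg t, pow_le_pow_left₀ ht hc 2,
      pow_le_pow_left₀ ht hc 3, mul_nonneg ht ht]
  · have htan : Real.log (1+t) ≤ Real.log 2 + (t-1)/2 := by
      have : Real.log ((1+t)/2) ≤ (1+t)/2 - 1 := Real.log_le_sub_one_of_pos (by linarith)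
      rw [Real.log_div h1t.ne' (by norm_num)] at this
      linarith
    have hq2 : Real.log (1 - t) ≤ -t - t^2/2 := by nlinarith [pow_nonneg ht 3, pow_nonneg ht 4]
    have hl2' : Real.log 2 < 0.6931471808 := Real.log_two_lt_d9
    nlinarith [mul_le_mul_of_nonneg_left htan h1t.le,
      mul_le_mul_of_nonneg_left hq2 h1t'.le, mul_pos h1t' h1t', sq_nonneg (t - 1),
      mul_nonneg (mul_nonneg ht ht) ht]

/-- `Real.binEntropy` (natural log) lower bound near 1/2. -/
lemma realBinEntropy_half_add_ge (δ : ℝ) (h0 : 0 ≤ δ) (h1 : δ < 1/2) :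
    Real.binEntropy (1/2 + δ) ≥ (1 - 4 * δ^2) * Real.log 2 := by
  have h2δ : (0:ℝ) ≤ 2*δ := by linarith
  have h2δ1 : 2*δ < 1 := by linarith
  have key := phi_le (2*δ) h2δ h2δ1
  have hx : (0:ℝ) < 1/2 + δ := by linarith
  have hx' : (0:ℝ) < 1/2 - δ := by linarith
  have e1 : Real.log (1/2 + δ) = Real.log (1 + 2*δ) - Real.log 2 := by
    rw [show (1/2 + δ : ℝ) = (1 + 2*δ)/2 by ring, Real.log_div (by linarith) (by norm_num)]
  have e2 : Real.log (1/2 - δ) = Real.log (1 - 2*δ) - Real.log 2 := by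
    rw [show (1/2 - δ : ℝ) = (1 - 2*δ)/2 by ring, Real.log_div (by linarith) (by norm_num)]
  rw [Real.binEntropy, Real.log_inv, Real.log_inv, show (1 - (1/2 + δ) : ℝ) = 1/2 - δ by ring,
    e1, e2]
  nlinarith [key]

/-- Binary entropy `H₂(x) = −x·log₂(x) − (1−x)·log₂(1−x)`,
with the convention `0·log₂(0) = 0`. -/
noncomputable def binEntropy (x : ℝ) : ℝ :=
  -x * Real.logb 2 x - (1 - x) * Real.logb 2 (1 - x)

lemma binEntropy_eq (x : ℝ) : binEntropy x = Real.binEntropy x / Real.log 2 := by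
  simp only [binEntropy, Real.binEntropy, Real.logb, Real.log_inv]
  ring

/-- Let `1/2 < p < 1`, `0 ≤ ε ≤ 1/2`, and `|q − 1/2| ≤ ε`. Then
`H₂(p·q + (1−p)·(1−q)) ≥ H₂(1/2 + ε·(2p−1))`, and consequently
`H₂(p·q + (1−p)·(1−q)) ≥ 1 − 4ε²·(1−2p)²`. -/
theorem binEntropy_mix_lower_bound (p ε q : ℝ)
    (hp0 : 1/2 < p) (hp1 : p < 1)
    (hε0 : 0 ≤ ε) (hε1 : ε ≤ 1/2)
    (hq : |q - 1/2| ≤ ε) :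
    binEntropy (p * q + (1 - p) * (1 - q)) ≥ binEntropy (1/2 + ε * (2 * p - 1)) ∧
    binEntropy (p * q + (1 - p) * (1 - q)) ≥ 1 - 4 * ε ^ 2 * (1 - 2 * p) ^ 2 := by
  set m : ℝ := p * q + (1 - p) * (1 - q) with hm
  set δ : ℝ := ε * (2 * p - 1) with hδ
  have hδ0 : 0 ≤ δ := by
    apply mul_nonneg hε0; linarith
  have hδhalf : δ < 1/2 := by nlinarith
  have hmδ : |m - 1/2| ≤ δ := by
    have : m - 1/2 = (2*p - 1) * (q - 1/2) := by rw [hm]; ring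
    rw [this, abs_mul, abs_of_nonneg (by linarith : (0:ℝ) ≤ 2*p - 1)]
    have h2p1 : (0:ℝ) ≤ 2*p - 1 := by linarith
    calc (2*p-1) * |q - 1/2| ≤ (2*p-1) * ε := by
          exact mul_le_mul_of_nonneg_left hq h2p1
      _ = δ := by rw [hδ]; ring
  have habs := abs_le.mp hmδ
  -- Real.binEntropy m ≥ Real.binEntropy (1/2 + δ)
  have hmain : Real.binEntropy (1/2 + δ) ≤ Real.binEntropy m := by
    have hanti := Real.binEntropy_strictAntiOn.antitoneOn
    rcases le_or_gt (1/2 : ℝ) m with hge | hlt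
    · have := hanti (a := m) (b := 1/2 + δ)
        (Set.mem_Icc.mpr ⟨by rw [show (2:ℝ)⁻¹ = 1/2 by norm_num]; exact hge, by linarith [habs.2]⟩)
        (Set.mem_Icc.mpr ⟨by rw [show (2:ℝ)⁻¹ = 1/2 by norm_num]; linarith, by linarith⟩)
        (by linarith [habs.2])
      exact this
    · have h1m : Real.binEntropy m = Real.binEntropy (1 - m) := (Real.binEntropy_one_sub m).symm
      rw [h1m]
      exact hanti (a := 1 - m) (b := 1/2 + δ)
        (Set.mem_Icc.mpr ⟨by rw [show (2:ℝ)⁻¹ = 1/2 by norm_num]; linarith,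
          by linarith [habs.1]⟩)
        (Set.mem_Icc.mpr ⟨by rw [show (2:ℝ)⁻¹ = 1/2 by norm_num]; linarith, by linarith⟩)
        (by linarith [habs.1])
  have hlog2 : (0:ℝ) < Real.log 2 := Real.log_pos (by norm_num)
  have part1 : binEntropy m ≥ binEntropy (1/2 + δ) := by
    rw [binEntropy_eq, binEntropy_eq]
    gcongr
  refine ⟨part1, ?_⟩
  have part2 : binEntropy (1/2 + δ) ≥ 1 - 4 * δ^2 := by
    rw [binEntropy_eq]
    have := realBinEntropy_half_add_ge δ hδ0 hδhalf
    rw [ge_iff_le, le_div_iff₀ hlog2]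
    linarith
  have : 1 - 4 * ε ^ 2 * (1 - 2 * p) ^ 2 = 1 - 4 * δ^2 := by rw [hδ]; ring
  rw [this]
  exact le_trans part2 part1
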